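/- Suppose a graph G on [n] is obtained from the complete graph K_n by successively removing edges e_1,…,e_k, where each e_i is exposed in the graph K_n \ {e_1,…,e_{i−1}}. Then G is connected if and only if each e_i is properly exposed in K_n \ {e_1,…,e_{i−1}}. -/

import Mathlib

/-- `S` is a maximal clique of the simple graph `G`. -/
def IsMaxGraphClique {V : Type} (G : SimpleGraph V) (S : Set V) : Prop :=
  G.IsClique S ∧ ∀ T : Set V, G.IsClique T → S ⊆ T → S = T

/-- An edge `e` of `G` is exposed if it is contained in a unique maximal clique of `G`. -/
def IsExposedEdge {V : Type} (G : SimpleGraph V) (e : Sym2 V) : Prop :=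
  e ∈ G.edgeSet ∧ ∃! S : Set V, IsMaxGraphClique G S ∧ ∀ v ∈ e, v ∈ S

/-- An edge `e` of `G` is properly exposed if it is exposed and the unique maximal clique
containing it has more than two vertices. -/
def IsProperlyExposedEdge {V : Type} (G : SimpleGraph V) (e : Sym2 V) : Prop :=
  IsExposedEdge G e ∧
    ∀ S : Set V, IsMaxGraphClique G S → (∀ v ∈ e, v ∈ S) → 2 < S.ncard

/-- One edge erasure step: `H` is obtained from `G` by deleting a properly exposed edge. -/
def EdgeErasureStep {V : Type} (G H : SimpleGraph V) : Prop :=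
  ∃ e, IsProperlyExposedEdge G e ∧ H = G.deleteEdges {e}

/-- `G` is chordal: every cycle of length at least four has a chord, i.e. `G` has no
induced cycle of length four or more. -/
def IsChordalGraph {V : Type} (G : SimpleGraph V) : Prop :=
  ∀ (v : V) (w : G.Walk v v), w.IsCycle → 4 ≤ w.length →
    ∃ a b : V, a ∈ w.support ∧ b ∈ w.support ∧ G.Adj a b ∧ s(a, b) ∉ w.edges

open SimpleGraph

set_option linter.unnecessarySimpa false

section aux
variable {V : Type}

lemma exists_maxclique [Finite V] {G : SimpleGraph V} {A : Set V} (hA : G.IsClique A) :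
    ∃ S, IsMaxGraphClique G S ∧ A ⊆ S := by
  obtain ⟨S, hS, hmax⟩ := Set.Finite.exists_maximalFor id {T : Set V | G.IsClique T ∧ A ⊆ T}
    (Set.toFinite _) ⟨A, hA, subset_rfl⟩
  exact ⟨S, ⟨hS.1, fun T hT hST => subset_antisymm hST (hmax ⟨hT, hS.2.trans hST⟩ hST)⟩, hS.2⟩

lemma triple_clique {G : SimpleGraph V} {u v w : V} (huv : G.Adj u v) (huw : G.Adj u w)
    (hvw : G.Adj v w) : G.IsClique {u, v, w} := by
  intro a ha b hb hne
  simp only [Set.mem_insert_iff, Set.mem_singleton_iff] at ha hb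
  rcases ha with rfl | rfl | rfl <;> rcases hb with rfl | rfl | rfl <;>
    first | exact absurd rfl hne | assumption | exact huv.symm | exact huw.symm | exact hvw.symm

lemma common_nbr_mem [Finite V] {G : SimpleGraph V} {u v : V}
    (hexp : IsExposedEdge G s(u, v)) {S : Set V}
    (hS : IsMaxGraphClique G S ∧ ∀ z ∈ s(u, v), z ∈ S)
    {w : V} (hwu : G.Adj u w) (hwv : G.Adj v w) : w ∈ S := by
  have huv : G.Adj u v := hexp.1
  obtain ⟨T, hT, hTsub⟩ := exists_maxclique (triple_clique huv hwu hwv)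
  obtain ⟨S₀, _, huniq⟩ := hexp.2
  have hTeq : T = S₀ := huniq T ⟨hT, by
    intro z hz
    rcases Sym2.mem_iff.mp hz with rfl | rfl
    · exact hTsub (by simp)
    · exact hTsub (by simp)⟩
  have hSeq : S = S₀ := huniq S hS
  rw [hSeq, ← hTeq]
  exact hTsub (by simp)

lemma walk_len1_edges {G : SimpleGraph V} {a b : V} (W : G.Walk a b) (h : W.length = 1) :
    W.edges = [s(a, b)] := by
  cases W with
  | nil => simp at h
  | cons hadj W' =>
    cases W' with
    | nil => simp
    | cons h2 W'' => simp [SimpleGraph.Walk.length_cons] at h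

/-- key auxiliary: in a chordal graph `G` with an edge `u v`, any walk from `u` to `v`
in `G` minus that edge passes through a common neighbour of `u` and `v`. -/
lemma chordal_common_nbr_on [DecidableEq V] {G G' : SimpleGraph V} (hch : IsChordalGraph G)
    {u v : V} (huv : G.Adj u v) (hG' : G' = G.deleteEdges {s(u, v)}) :
    ∀ (L : ℕ) (P : G'.Walk u v), P.length ≤ L →
      ∃ x ∈ P.support, G.Adj u x ∧ G.Adj x v := by
  subst hG'
  set G' := G.deleteEdges {s(u, v)} with hG'
  intro L
  induction L with
  | zero =>
    intro P hP
    exact absurd (Walk.eq_of_length_eq_zero (Nat.le_zero.mp hP)) huv.ne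
  | succ L ih =>
    intro P hP
    set Q := P.bypass with hQdef
    have hQpath : Q.IsPath := P.bypass_isPath
    have hQlen : Q.length ≤ P.length := P.length_bypass_le
    have hQsupp : Q.support ⊆ P.support := P.support_bypass_subset
    have hQedges : ∀ f ∈ Q.edges, f ∈ G'.edgeSet := fun f hf => Q.edges_subset_edgeSet hf
    have hsuv : s(u, v) ∉ Q.edges := by
      intro hmem
      have := hQedges _ hmem
      rw [edgeSet_deleteEdges] at this
      exact this.2 rfl
    rcases Nat.lt_or_ge Q.length 3 with hlt | hge
    · -- length 0, 1, or 2
      interval_cases h : Q.length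
      · exact absurd (Walk.eq_of_length_eq_zero h) huv.ne
      · exact absurd (walk_len1_edges Q h ▸ List.mem_singleton_self _) hsuv
      · -- middle vertex
        match Q, hQpath, hQsupp, h with
        | .cons h1 (.cons h2 .nil), _, hQs, _ =>
          exact ⟨_, hQs (by simp), ((deleteEdges_adj).mp h1).1, ((deleteEdges_adj).mp h2).1⟩
    · -- build the cycle
      have hsubG : ∀ f ∈ Q.edges, f ∈ G.edgeSet := by
        intro f hf
        have := hQedges f hf
        rw [edgeSet_deleteEdges] at this
        exact this.1
      set Qt := Q.transfer G hsubG with hQt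
      have hQtedges : Qt.edges = Q.edges := Walk.edges_transfer Q hsubG
      have hQtsupp : Qt.support = Q.support := Walk.support_transfer Q hsubG
      have hC : (Walk.cons huv.symm Qt).IsCycle := by
        rw [Walk.cons_isCycle_iff]
        refine ⟨hQpath.transfer _, ?_⟩
        rw [Walk.edges_transfer, Sym2.eq_swap]
        exact hsuv
      have hClen : 4 ≤ (Walk.cons huv.symm Qt).length := by
        rw [Walk.length_cons, Walk.length_transfer]; omega
      obtain ⟨a, b, ha, hb, hadj, hnot⟩ := hch v _ hC hClen
      have hmemQ : ∀ x, x ∈ (Walk.cons huv.symm Qt).support → x ∈ Q.support := by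
        intro x hx
        rw [Walk.support_cons] at hx
        rcases List.mem_cons.mp hx with rfl | hx
        · exact Walk.end_mem_support Q
        · rwa [hQtsupp] at hx
      have ha' : a ∈ Q.support := hmemQ a ha
      have hb' : b ∈ Q.support := hmemQ b hb
      have hne : s(a, b) ≠ s(u, v) := by
        intro hh
        apply hnot
        rw [Walk.edges_cons, hh, Sym2.eq_swap]
        exact List.mem_cons_self
      have hG'ab : G'.Adj a b := deleteEdges_adj.mpr ⟨hadj, by simpa using hne⟩
      have hnotQ : s(a, b) ∉ Q.edges := by
        intro hmem
        apply hnot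
        rw [Walk.edges_cons]
        exact List.mem_cons_of_mem _ (by rwa [hQtedges])
      -- split Q at a
      set T := Q.takeUntil a ha' with hT
      set D := Q.dropUntil a ha' with hD
      have hTD : T.length + D.length = Q.length := by
        have := congrArg Walk.length (Q.take_spec ha')
        rwa [Walk.length_append] at this
      have hTedges : T.edges ⊆ Q.edges := Q.edges_takeUntil_subset ha'
      have hDedges : D.edges ⊆ Q.edges := Q.edges_dropUntil_subset ha'
      have hbsplit : b ∈ T.support ∨ b ∈ D.support := by
        have := hb'
        rw [← Q.take_spec ha', Walk.mem_support_append_iff] at this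
        exact this
      -- in either case, build a strictly shorter walk from u to v in G'
      have main : ∃ W : G'.Walk u v, W.length ≤ L ∧ W.support ⊆ Q.support := by
        rcases hbsplit with hbT | hbD
        · -- b occurs in T (before a)
          have hlen2 : 2 ≤ (T.dropUntil b hbT).length := by
            rcases Nat.lt_or_ge (T.dropUntil b hbT).length 2 with hl | hl
            · interval_cases hh : (T.dropUntil b hbT).length
              · exact absurd (Walk.eq_of_length_eq_zero hh) hadj.ne'
              · exfalso
                apply hnotQ
                have : (T.dropUntil b hbT).edges = [s(b, a)] := walk_len1_edges _ hh
                have hm : s(b, a) ∈ (T.dropUntil b hbT).edges := this ▸ List.mem_singleton_self _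
                rw [Sym2.eq_swap] at hm
                exact hTedges (T.edges_dropUntil_subset hbT hm)
            · exact hl
          have hTsplit : (T.takeUntil b hbT).length + (T.dropUntil b hbT).length = T.length := by
            have := congrArg Walk.length (T.take_spec hbT)
            rwa [Walk.length_append] at this
          refine ⟨(T.takeUntil b hbT).append (Walk.cons hG'ab.symm D), ?_, ?_⟩
          · rw [Walk.length_append, Walk.length_cons]; omega
          · intro x hx
            rw [Walk.mem_support_append_iff] at hx
            rcases hx with hx | hx
            · exact Q.support_takeUntil_subset ha' (T.support_takeUntil_subset hbT hx)
            · rw [Walk.support_cons] at hx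
              rcases List.mem_cons.mp hx with rfl | hx
              · exact hb'
              · exact Q.support_dropUntil_subset ha' hx
        · -- b occurs in D (after a)
          have hlen2 : 2 ≤ (D.takeUntil b hbD).length := by
            rcases Nat.lt_or_ge (D.takeUntil b hbD).length 2 with hl | hl
            · interval_cases hh : (D.takeUntil b hbD).length
              · exact absurd (Walk.eq_of_length_eq_zero hh) hadj.ne
              · exfalso
                apply hnotQ
                have : (D.takeUntil b hbD).edges = [s(a, b)] := walk_len1_edges _ hh
                have hm : s(a, b) ∈ (D.takeUntil b hbD).edges := this ▸ List.mem_singleton_self _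
                exact hDedges (D.edges_takeUntil_subset hbD hm)
            · exact hl
          have hDsplit : (D.takeUntil b hbD).length + (D.dropUntil b hbD).length = D.length := by
            have := congrArg Walk.length (D.take_spec hbD)
            rwa [Walk.length_append] at this
          refine ⟨T.append (Walk.cons hG'ab (D.dropUntil b hbD)), ?_, ?_⟩
          · rw [Walk.length_append, Walk.length_cons]; omega
          · intro x hx
            rw [Walk.mem_support_append_iff] at hx
            rcases hx with hx | hx
            · exact Q.support_takeUntil_subset ha' hx
            · rw [Walk.support_cons] at hx
              rcases List.mem_cons.mp hx with rfl | hx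
              · exact ha'
              · exact Q.support_dropUntil_subset ha' (D.support_dropUntil_subset hbD hx)
      obtain ⟨W, hWlen, hWsupp⟩ := main
      obtain ⟨x, hx, hx1, hx2⟩ := ih W hWlen
      exact ⟨x, hQsupp (hWsupp hx), hx1, hx2⟩

lemma closed_mem_tail {G : SimpleGraph V} {z x : V} {W : G.Walk z z} (hW : W ≠ Walk.nil) :
    x ∈ W.support ↔ x ∈ W.support.tail := by
  constructor
  · intro hx
    rw [Walk.support_eq_cons] at hx
    rcases List.mem_cons.mp hx with rfl | h
    · cases W with
      | nil => exact absurd rfl hW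
      | cons h p => simpa using Walk.end_mem_support p
    · exact h
  · intro hx
    rw [Walk.support_eq_cons]
    exact List.mem_cons_of_mem _ hx

lemma mem_rotate_support [DecidableEq V] {G : SimpleGraph V} {z u x : V} {c : G.Walk z z}
    (hc : c.IsCycle) (hu : u ∈ c.support) : x ∈ (c.rotate u hu).support ↔ x ∈ c.support := by
  have h1 : c ≠ Walk.nil := ((Walk.isCycle_def c).mp hc).2.1
  have h2 : c.rotate u hu ≠ Walk.nil := ((Walk.isCycle_def _).mp (hc.rotate hu)).2.1
  rw [closed_mem_tail h1, closed_mem_tail h2]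
  exact (Walk.support_rotate c u hu).perm.mem_iff

lemma chord_of_uv [Finite V] [DecidableEq V] {G G' : SimpleGraph V} (hch : IsChordalGraph G)
    {u v : V} (hexp : IsExposedEdge G s(u, v)) (hG' : G' = G.deleteEdges {s(u, v)}) {z : V}
    (c : G'.Walk z z) (hc : c.IsCycle) (hu : u ∈ c.support) (hv : v ∈ c.support) :
    ∃ a b : V, a ∈ c.support ∧ b ∈ c.support ∧ G'.Adj a b ∧ s(a, b) ∉ c.edges := by
  have huv : G.Adj u v := hexp.1
  set c' := c.rotate u hu with hc'def
  have hc' : c'.IsCycle := hc.rotate hu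
  have hv' : v ∈ c'.support := (mem_rotate_support hc hu).mpr hv
  set W1 := c'.takeUntil v hv' with hW1def
  set W2 := c'.dropUntil v hv' with hW2def
  obtain ⟨x, hxW, hux, hxv⟩ := chordal_common_nbr_on hch huv hG' W1.length W1 le_rfl
  obtain ⟨y, hyW, hvy, hyu⟩ :=
    chordal_common_nbr_on hch huv.symm (by rw [hG', Sym2.eq_swap]) W2.length W2 le_rfl
  have hsplit : c'.support = W1.support ++ W2.support.tail := by
    conv_lhs => rw [← c'.take_spec hv']
    rw [Walk.support_append]
  have htail : c'.support.tail = W1.support.tail ++ W2.support.tail := by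
    rw [hsplit]
    conv_lhs => rw [Walk.support_eq_cons W1]
    simp
  have hnd : (W1.support.tail ++ W2.support.tail).Nodup := by
    have := ((Walk.isCycle_def _).mp hc').2.2
    rwa [htail] at this
  have hdisj := List.disjoint_of_nodup_append hnd
  have hxt : x ∈ W1.support.tail := by
    have h := hxW
    rw [Walk.support_eq_cons W1] at h
    rcases List.mem_cons.mp h with rfl | h
    · exact absurd hux (G.irrefl)
    · exact h
  have hyt : y ∈ W2.support.tail := by
    have h := hyW
    rw [Walk.support_eq_cons W2] at h
    rcases List.mem_cons.mp h with rfl | h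
    · exact absurd hvy (G.irrefl)
    · exact h
  have hxy : x ≠ y := fun h => hdisj hxt (h ▸ hyt)
  have hxu : x ≠ u := hux.ne'
  have hxvne : x ≠ v := hxv.ne
  have hyune : y ≠ u := hyu.ne
  have hyvne : y ≠ v := hvy.ne'
  obtain ⟨S, hSmax, hSuniq⟩ := hexp.2
  have hxS : x ∈ S := common_nbr_mem hexp hSmax hux hxv.symm
  have hyS : y ∈ S := common_nbr_mem hexp hSmax hyu.symm hvy
  have hadjxy : G.Adj x y := hSmax.1.1 hxS hyS hxy
  have hG'xy : G'.Adj x y := by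
    rw [hG', deleteEdges_adj]
    refine ⟨hadjxy, ?_⟩
    simp only [Set.mem_singleton_iff]
    intro h
    rcases Sym2.eq_iff.mp h with ⟨h1, _⟩ | ⟨h1, _⟩
    · exact hxu h1
    · exact hxvne h1
  have hedges : s(x, y) ∉ c'.edges := by
    have hce : c'.edges = W1.edges ++ W2.edges := by
      conv_lhs => rw [← c'.take_spec hv']
      rw [Walk.edges_append]
    rw [hce]
    intro hmem
    rcases List.mem_append.mp hmem with h | h
    · have hy1 : y ∈ W1.support := Walk.snd_mem_support_of_mem_edges W1 h
      rw [Walk.support_eq_cons W1] at hy1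
      rcases List.mem_cons.mp hy1 with h' | h'
      · exact hyune h'
      · exact hdisj h' hyt
    · have hx2 : x ∈ W2.support := Walk.fst_mem_support_of_mem_edges W2 h
      rw [Walk.support_eq_cons W2] at hx2
      rcases List.mem_cons.mp hx2 with h' | h'
      · exact hxvne h'
      · exact hdisj hxt h'
  refine ⟨x, y, ?_, ?_, hG'xy, ?_⟩
  · exact (mem_rotate_support hc hu).mp (c'.support_takeUntil_subset hv' hxW)
  · exact (mem_rotate_support hc hu).mp (c'.support_dropUntil_subset hv' hyW)
  · intro hmem
    exact hedges (((Walk.rotate_edges c u hu).perm.mem_iff).mpr hmem)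

lemma chordal_deleteEdges_of_exposed [Finite V] [DecidableEq V] {G : SimpleGraph V}
    (hch : IsChordalGraph G) {f : Sym2 V} (hexp : IsExposedEdge G f) :
    IsChordalGraph (G.deleteEdges {f}) := by
  induction f using Sym2.ind with
  | _ u v =>
  intro z c hc hlen
  have hsub : ∀ g ∈ c.edges, g ∈ G.edgeSet := by
    intro g hg
    have := c.edges_subset_edgeSet hg
    rw [edgeSet_deleteEdges] at this
    exact this.1
  have hcG := hc.transfer hsub
  have hlen' : 4 ≤ (c.transfer G hsub).length := by rwa [Walk.length_transfer]
  obtain ⟨a, b, ha, hb, hadj, hnot⟩ := hch z _ hcG hlen'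
  rw [Walk.support_transfer] at ha hb
  rw [Walk.edges_transfer] at hnot
  by_cases hab : s(a, b) = s(u, v)
  · rcases Sym2.eq_iff.mp hab with ⟨h1, h2⟩ | ⟨h1, h2⟩
    · exact chord_of_uv hch hexp rfl c hc (h1 ▸ ha) (h2 ▸ hb)
    · exact chord_of_uv hch (u := v) (v := u) (by rwa [Sym2.eq_swap])
        (by rw [Sym2.eq_swap]) c hc (h1 ▸ ha) (h2 ▸ hb)
  · exact ⟨a, b, ha, hb, deleteEdges_adj.mpr ⟨hadj, by simpa using hab⟩, hnot⟩

lemma top_chordal : IsChordalGraph (⊤ : SimpleGraph V) := by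
  intro v c hc hlen
  cases c with
  | nil => simp at hlen
  | cons h1 p1 =>
    cases p1 with
    | nil => simp at hlen
    | cons h2 p2 =>
      cases p2 with
      | nil => simp [Walk.length_cons] at hlen
      | cons h3 p3 =>
        rename_i w1 w2 w3
        have hvL : v ∈ p3.support.tail := by
          cases p3 with
          | nil => simp [Walk.length_cons] at hlen
          | cons h4 p4 => simpa using Walk.end_mem_support p4
        have hnd : (w1 :: w2 :: w3 :: p3.support.tail).Nodup := by
          have h := ((Walk.isCycle_def _).mp hc).2.2
          simp only [Walk.support_cons, List.tail_cons] at h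
          rwa [Walk.support_eq_cons p3] at h
        obtain ⟨hw1, hnd1⟩ := List.nodup_cons.mp hnd
        obtain ⟨hw2, hnd2⟩ := List.nodup_cons.mp hnd1
        obtain ⟨hw3, _⟩ := List.nodup_cons.mp hnd2
        have hv1 : v ≠ w1 := fun h =>
          hw1 (h ▸ List.mem_cons_of_mem _ (List.mem_cons_of_mem _ hvL))
        have hv2 : v ≠ w2 := fun h => hw2 (h ▸ List.mem_cons_of_mem _ hvL)
        have hv3 : v ≠ w3 := fun h => hw3 (h ▸ hvL)
        have h12 : w1 ≠ w2 := fun h => hw1 (h ▸ List.mem_cons_self)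
        refine ⟨v, w2, by simp, by simp, by simpa using hv2, ?_⟩
        intro hmem
        simp only [Walk.edges_cons, List.mem_cons] at hmem
        rcases hmem with h | h | h | h
        · rcases Sym2.eq_iff.mp h with ⟨_, hh⟩ | ⟨hh, _⟩
          · exact h12 hh.symm
          · exact hv1 hh
        · rcases Sym2.eq_iff.mp h with ⟨hh, _⟩ | ⟨hh, _⟩
          · exact hv1 hh
          · exact hv2 hh
        · rcases Sym2.eq_iff.mp h with ⟨hh, _⟩ | ⟨hh, _⟩
          · exact hv2 hh
          · exact hv3 hh
        · have hw : w2 ∈ p3.support := Walk.snd_mem_support_of_mem_edges p3 h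
          rw [Walk.support_eq_cons p3] at hw
          exact hw2 hw

lemma sym2_rep (z : Sym2 V) : ∃ x y, z = s(x, y) :=
  Sym2.ind (fun x y => ⟨x, y, rfl⟩) z

lemma connected_deleteEdge {G : SimpleGraph V} {u v : V}
    (hconn : G.Connected) (hre : (G.deleteEdges {s(u, v)}).Reachable u v) :
    (G.deleteEdges {s(u, v)}).Connected := by
  rw [connected_iff] at hconn ⊢
  refine ⟨fun a b => ?_, hconn.2⟩
  obtain ⟨W⟩ := hconn.1 a b
  induction W with
  | nil => exact Reachable.refl _
  | cons h p ih =>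
    refine Reachable.trans ?_ ih
    rename_i x y _
    by_cases he : s(x, y) = s(u, v)
    · rcases Sym2.eq_iff.mp he with ⟨rfl, rfl⟩ | ⟨rfl, rfl⟩
      · exact hre
      · exact hre.symm
    · exact (deleteEdges_adj.mpr ⟨h, by simpa using he⟩).reachable

section main

variable {n k : ℕ} (e : Fin k → Sym2 (Fin n))

def Gm (m : ℕ) : SimpleGraph (Fin n) :=
  (⊤ : SimpleGraph (Fin n)).deleteEdges (e '' {j : Fin k | (j : ℕ) < m})

lemma Gm_fin (i : Fin k) :
    (⊤ : SimpleGraph (Fin n)).deleteEdges (e '' {j : Fin k | j < i}) = Gm e i.val := rfl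

lemma Gm_succ (m : ℕ) (hm : m < k) :
    Gm e (m + 1) = (Gm e m).deleteEdges {e ⟨m, hm⟩} := by
  rw [Gm, Gm, deleteEdges_deleteEdges]
  congr 1
  ext x
  simp only [Set.mem_union, Set.mem_image, Set.mem_setOf_eq, Set.mem_singleton_iff]
  constructor
  · rintro ⟨j, hj, rfl⟩
    rcases Nat.lt_succ_iff_lt_or_eq.mp hj with hj' | hj'
    · exact Or.inl ⟨j, hj', rfl⟩
    · refine Or.inr ?_
      have hje : j = (⟨m, hm⟩ : Fin k) := Fin.ext hj'
      rw [hje]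
  · rintro (⟨j, hj, rfl⟩ | rfl)
    · exact ⟨j, Nat.lt_succ_of_lt hj, rfl⟩
    · exact ⟨⟨m, hm⟩, Nat.lt_succ_self m, rfl⟩

lemma Gm_succ_ge (m : ℕ) (hm : k ≤ m) : Gm e (m + 1) = Gm e m := by
  have hs : {j : Fin k | (j : ℕ) < m + 1} = {j : Fin k | (j : ℕ) < m} := by
    ext j
    have := j.isLt
    simp only [Set.mem_setOf_eq]
    omega
  rw [Gm, Gm, hs]

lemma Gm_final : Gm e k = (⊤ : SimpleGraph (Fin n)).deleteEdges (Set.range e) := by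
  rw [Gm]
  congr 1
  ext x
  simp only [Set.mem_image, Set.mem_setOf_eq, Set.mem_range]
  exact ⟨fun ⟨j, _, h⟩ => ⟨j, h⟩, fun ⟨j, h⟩ => ⟨j, j.isLt, h⟩⟩

lemma Gm_le {m m' : ℕ} (h : m ≤ m') : Gm e m' ≤ Gm e m := by
  apply deleteEdges_anti
  exact Set.image_mono (fun j hj => lt_of_lt_of_le hj h)

lemma Gm_chordal
    (hexp : ∀ i : Fin k,
      IsExposedEdge ((⊤ : SimpleGraph (Fin n)).deleteEdges (e '' {j : Fin k | j < i})) (e i))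
    (m : ℕ) : IsChordalGraph (Gm e m) := by
  induction m with
  | zero =>
    have h0 : Gm e 0 = (⊤ : SimpleGraph (Fin n)) := by
      rw [Gm]
      convert deleteEdges_empty
      simp
    rw [h0]
    exact top_chordal
  | succ m ih =>
    rcases Nat.lt_or_ge m k with hm | hm
    · rw [Gm_succ e m hm]
      exact chordal_deleteEdges_of_exposed ih (Gm_fin e ⟨m, hm⟩ ▸ hexp ⟨m, hm⟩)
    · rw [Gm_succ_ge e m hm]
      exact ih

lemma Gm_connected (hn : 0 < n)
    (hprop : ∀ i : Fin k, IsProperlyExposedEdge (Gm e i.val) (e i)) :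
    ∀ m : ℕ, (Gm e m).Connected := by
  intro m
  induction m with
  | zero =>
    have h0 : Gm e 0 = (⊤ : SimpleGraph (Fin n)) := by
      rw [Gm]
      convert deleteEdges_empty
      simp
    rw [h0]
    have : Nonempty (Fin n) := ⟨⟨0, hn⟩⟩
    exact connected_top
  | succ m ih =>
    rcases Nat.lt_or_ge m k with hm | hm
    · rw [Gm_succ e m hm]
      set i : Fin k := ⟨m, hm⟩ with hidef
      obtain ⟨u, v, huv⟩ := sym2_rep (e i)
      rw [huv]
      obtain ⟨hexp_i, hncard⟩ := hprop i
      rw [huv] at hexp_i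
      obtain ⟨S, hS, _⟩ := hexp_i.2
      have hadj : (Gm e m).Adj u v := hexp_i.1
      have huS : u ∈ S := hS.2 u (by simp)
      have hvS : v ∈ S := hS.2 v (by simp)
      have hbig : 2 < S.ncard := hncard S hS.1 (by rw [huv]; exact hS.2)
      have hw : ∃ w ∈ S, w ≠ u ∧ w ≠ v := by
        by_contra hcon
        push_neg at hcon
        have hsub : S ⊆ {u, v} := by
          intro w hwS
          by_cases h : w = u
          · exact Or.inl h
          · exact Or.inr (hcon w hwS h)
        have h1 := Set.ncard_le_ncard hsub (Set.toFinite _)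
        have h2 : ({u, v} : Set (Fin n)).ncard ≤ 2 := by
          apply le_trans (Set.ncard_insert_le _ _)
          simp
        omega
      obtain ⟨w, hwS, hwu, hwv⟩ := hw
      have hadj_uw : (Gm e m).Adj u w := hS.1.1 huS hwS (Ne.symm hwu)
      have hadj_wv : (Gm e m).Adj w v := hS.1.1 hwS hvS hwv
      have hre : ((Gm e m).deleteEdges {s(u, v)}).Reachable u v := by
        refine Reachable.trans (Adj.reachable (v := w) ?_) (Adj.reachable ?_)
        · refine deleteEdges_adj.mpr ⟨hadj_uw, ?_⟩
          simp only [Set.mem_singleton_iff]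
          intro h
          rcases Sym2.eq_iff.mp h with ⟨_, h2⟩ | ⟨h1, _⟩
          · exact hwv h2
          · exact hadj.ne h1
        · refine deleteEdges_adj.mpr ⟨hadj_wv, ?_⟩
          simp only [Set.mem_singleton_iff]
          intro h
          rcases Sym2.eq_iff.mp h with ⟨h1, _⟩ | ⟨_, h2⟩
          · exact hwu h1
          · exact hadj.ne h2.symm
      exact connected_deleteEdge ih hre
    · rw [Gm_succ_ge e m hm]
      exact ih

end main

end aux

/-- if `G` is obtained from `K_n` by successively removing edges
`e_1,…,e_k`, each `e_i` exposed in `K_n \ {e_1,…,e_{i-1}}`, then `G` is connected iff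
each `e_i` is properly exposed in `K_n \ {e_1,…,e_{i-1}}`. -/
theorem connected_iff_all_properly_exposed (n k : ℕ) (hn : 0 < n)
    (e : Fin k → Sym2 (Fin n))
    (hexp : ∀ i : Fin k,
      IsExposedEdge ((⊤ : SimpleGraph (Fin n)).deleteEdges (e '' {j : Fin k | j < i})) (e i)) :
    ((⊤ : SimpleGraph (Fin n)).deleteEdges (Set.range e)).Connected ↔
      ∀ i : Fin k,
        IsProperlyExposedEdge
          ((⊤ : SimpleGraph (Fin n)).deleteEdges (e '' {j : Fin k | j < i})) (e i) := by
  have hexp' : ∀ i : Fin k, IsExposedEdge (Gm e i.val) (e i) := fun i => Gm_fin e i ▸ hexp i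
  constructor
  · intro hconn i
    rw [Gm_fin e i]
    by_contra hnp
    have hch : IsChordalGraph (Gm e i.val) := Gm_chordal e hexp i.val
    have hexpi := hexp' i
    obtain ⟨u, v, huv⟩ := sym2_rep (e i)
    rw [IsProperlyExposedEdge] at hnp
    push_neg at hnp
    obtain ⟨S, hSmax, hScont, hSn⟩ := hnp hexpi
    rw [huv] at hexpi hScont
    have hadj : (Gm e i.val).Adj u v := hexpi.1
    have hno : ∀ w, (Gm e i.val).Adj u w → (Gm e i.val).Adj w v → False := by
      intro w h1 h2
      have hwS : w ∈ S := common_nbr_mem hexpi ⟨hSmax, hScont⟩ h1 h2.symm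
      have h3 : ({u, v, w} : Set (Fin n)).ncard = 3 :=
        Set.ncard_eq_three.mpr ⟨u, v, w, hadj.ne, h1.ne, h2.ne.symm, rfl⟩
      have hsub : ({u, v, w} : Set (Fin n)) ⊆ S := by
        intro z hz
        rcases hz with rfl | rfl | rfl
        · exact hScont z (by simp)
        · exact hScont z (by simp)
        · exact hwS
      have := Set.ncard_le_ncard hsub (Set.toFinite S)
      omega
    have hnore : ¬((Gm e i.val).deleteEdges {s(u, v)}).Reachable u v := by
      rintro ⟨P⟩
      obtain ⟨x, _, h1, h2⟩ := chordal_common_nbr_on hch hadj rfl P.length P le_rfl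
      exact hno x h1 h2
    have h1 : Gm e (i.val + 1) = (Gm e i.val).deleteEdges {s(u, v)} := by
      rw [Gm_succ e i.val i.isLt]
      congr 1
      rw [← huv]
    have hle : (⊤ : SimpleGraph (Fin n)).deleteEdges (Set.range e) ≤
        (Gm e i.val).deleteEdges {s(u, v)} := by
      rw [← h1, ← Gm_final e]
      exact Gm_le e i.isLt
    exact hnore (Reachable.mono hle (hconn.preconnected u v))
  · intro hprop
    rw [← Gm_final e]
    exact Gm_connected e hn (fun i => Gm_fin e i ▸ hprop i) k
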